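/- Let X be a type with decidable equality equipped with a linear order, and let A be a unital ring. Suppose γ : X → A and s : X → A satisfy the relations R': (R'₁) s x * s x = 1 and s x * s x' = s x' * s x for all x, x'; (R'₂) γ x * γ x' + γ x' * γ x = 2·1 if x = x' and = 0 if x ≠ x'; (R'₃) s x * γ x' * s x = −γ x' if x = x' and = γ x' if x ≠ x'. For a finset J of X, let Γ_J denote the product of the γ x for x ∈ J taken in increasing order. Then for all finsets J, J' of X: Γ_J * Γ_{J'} = (−1)^{|J|·|J'| − |J ∩ J'|} • (Γ_{J'} * Γ_J). -/

import Mathlib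

/-- The ordered product of `f x` over `x ∈ J`, taken in increasing order. -/
def ordProd {X : Type*} [LinearOrder X] {A : Type*} [Monoid A]
    (f : X → A) (J : Finset X) : A :=
  ((J.sort (· ≤ ·)).map f).prod

section aux
variable {X : Type*} [DecidableEq X] {A : Type*} [Ring A] (γ : X → A)

lemma aux_anticomm
    (hR2 : ∀ x x' : X, γ x * γ x' + γ x' * γ x = if x = x' then (2 : A) * 1 else 0)
    {x x' : X} (h : x ≠ x') : γ x * γ x' = -(γ x' * γ x) := by
  have := hR2 x x'
  rw [if_neg h] at this
  exact eq_neg_of_add_eq_zero_left this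

lemma aux_mul_single
    (hR2 : ∀ x x' : X, γ x * γ x' + γ x' * γ x = if x = x' then (2 : A) * 1 else 0)
    (x : X) (l : List X) :
    (l.map γ).prod * γ x =
      ((-1 : ℤ) ^ (l.countP (fun y => y ≠ x))) • (γ x * (l.map γ).prod) := by
  induction l with
  | nil => simp
  | cons a l ih =>
    simp only [List.map_cons, List.prod_cons, List.countP_cons]
    rw [mul_assoc, ih, mul_smul_comm]
    by_cases h : a = x
    · subst h
      simp [← mul_assoc]
    · have hd : (decide ¬a = x) = true := by simp [h]
      rw [hd, if_pos rfl, pow_succ, ← mul_assoc, aux_anticomm γ hR2 h]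
      simp only [smul_smul, neg_mul, mul_neg, neg_smul, mul_one, mul_assoc, smul_neg]

lemma aux_mul_list
    (hR2 : ∀ x x' : X, γ x * γ x' + γ x' * γ x = if x = x' then (2 : A) * 1 else 0)
    (l l' : List X) :
    (l.map γ).prod * (l'.map γ).prod =
      ((-1 : ℤ) ^ ((l'.map (fun x => l.countP (fun y => y ≠ x))).sum)) •
        ((l'.map γ).prod * (l.map γ).prod) := by
  induction l' with
  | nil => simp
  | cons x l' ih =>
    simp only [List.map_cons, List.prod_cons, List.sum_cons]
    rw [← mul_assoc, aux_mul_single γ hR2, smul_mul_assoc, mul_assoc, ih,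
      mul_smul_comm, smul_smul, ← pow_add, ← mul_assoc]

end aux

theorem stmt_9 {X : Type*} [DecidableEq X] [LinearOrder X] {A : Type*} [Ring A]
    (γ s : X → A)
    (hR1a : ∀ x : X, s x * s x = 1)
    (hR1b : ∀ x x' : X, s x * s x' = s x' * s x)
    (hR2 : ∀ x x' : X, γ x * γ x' + γ x' * γ x = if x = x' then (2 : A) * 1 else 0)
    (hR3 : ∀ x x' : X, s x * γ x' * s x = if x = x' then -γ x' else γ x')
    (J J' : Finset X) :
    ordProd γ J * ordProd γ J' =
      ((-1 : ℤ) ^ (J.card * J'.card - (J ∩ J').card)) •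
        (ordProd γ J' * ordProd γ J) := by
  have key := aux_mul_list γ hR2 (J.sort (· ≤ ·)) (J'.sort (· ≤ ·))
  set E : ℕ := (((J'.sort (· ≤ ·))).map
      (fun x => (J.sort (· ≤ ·)).countP (fun y => y ≠ x))).sum with hE
  -- countP over the sorted list equals a filter card
  have hcount : ∀ x : X, (J.sort (· ≤ ·)).countP (fun y => y ≠ x)
      = (J.filter (· ≠ x)).card := by
    intro x
    have hperm := Finset.sort_perm_toList J (· ≤ ·)
    rw [hperm.countP_eq]
    rw [← Multiset.coe_countP, Finset.coe_toList, Multiset.countP_eq_card_filter]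
    rfl
  -- E expressed as a finset sum
  have hEsum : E = ∑ x ∈ J', (J.filter (· ≠ x)).card := by
    rw [hE]
    have hperm := (Finset.sort_perm_toList J' (· ≤ ·)).map
      (fun x => (J.sort (· ≤ ·)).countP (fun y => y ≠ x))
    rw [hperm.sum_eq, Finset.sum_map_toList]
    exact Finset.sum_congr rfl fun x _ => hcount x
  have hmain : E + (J ∩ J').card = J.card * J'.card := by
    have hic : (J ∩ J').card = ∑ x ∈ J', if x ∈ J then 1 else 0 := by
      rw [Finset.inter_comm, ← Finset.card_filter]
      congr 1
    have hterm : ∀ x ∈ J', (J.filter (· ≠ x)).card + (if x ∈ J then 1 else 0) = J.card := by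
      intro x _
      have := Finset.card_filter_add_card_filter_not (s := J) (p := (· ≠ x))
      rw [← this]
      congr 1
      have : (J.filter fun y => ¬ y ≠ x) = J.filter (· = x) := by
        ext y; simp
      rw [this, Finset.filter_eq' J x]
      split <;> simp_all
    rw [hEsum, hic, ← Finset.sum_add_distrib, Finset.sum_congr rfl hterm,
      Finset.sum_const, smul_eq_mul, mul_comm]
  have hle : (J ∩ J').card ≤ J.card * J'.card := by omega
  have hsign : ((-1 : ℤ) ^ E) = (-1 : ℤ) ^ (J.card * J'.card - (J ∩ J').card) := by
    have h1 : ((-1 : ℤ) ^ E) * (-1) ^ (J ∩ J').card = (-1) ^ (J.card * J'.card) := by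
      rw [← pow_add, hmain]
    have h2 : ((-1 : ℤ) ^ (J.card * J'.card - (J ∩ J').card)) * (-1) ^ (J ∩ J').card
        = (-1) ^ (J.card * J'.card) := by
      rw [← pow_add, Nat.sub_add_cancel hle]
    have h3 : ((-1 : ℤ) ^ (J ∩ J').card) ≠ 0 := by positivity
    exact mul_right_cancel₀ h3 (h1.trans h2.symm)
  rw [ordProd, ordProd, key, hsign]
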